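/- In Mem⁰, for every position (n, k) with 1 ≤ k ≤ n, the Grundy value G(n, k) equals either G(n_∞) := G(n, n+1) or G(n − k, k). -/
import Mathlib


/-- Grundy value of Mem⁰: options of (n,k) are (n-a, a) for 1 ≤ a ≤ n, a ≠ k. -/
noncomputable def memZeroG (n k : ℕ) : ℕ :=
  sInf {v : ℕ | v ∉ (((Finset.Icc 1 n).erase k).attach.image
    (fun a => memZeroG (n - a.1) a.1))}
termination_by n
decreasing_by
  have h := Finset.mem_Icc.mp (Finset.mem_of_mem_erase a.2)
  omega

lemma memZeroG_spec (n k : ℕ) :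
    memZeroG n k = sInf {v : ℕ | ∀ a, 1 ≤ a → a ≤ n → a ≠ k → memZeroG (n - a) a ≠ v} := by
  rw [memZeroG]
  congr 1
  ext v
  simp only [Set.mem_setOf_eq, Finset.mem_image, Finset.mem_attach, true_and, Subtype.exists,
    Finset.mem_erase, Finset.mem_Icc, not_exists]
  constructor
  · intro h a h1 h2 h3
    exact h a ⟨h3, h1, h2⟩
  · intro h a ha
    exact h a ha.2.1 ha.2.2 ha.1

/-- In Mem⁰, G(n, k) equals G(n_∞) = G(n, n+1) or G(n - k, k). -/
theorem memZero_two_possibilities (n k : ℕ) (hk : 1 ≤ k) (hkn : k ≤ n) :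
    memZeroG n k = memZeroG n (n + 1) ∨ memZeroG n k = memZeroG (n - k) k := by
  set g := memZeroG (n - k) k with hg
  set T : Set ℕ := {v | ∀ a, 1 ≤ a → a ≤ n → a ≠ k → memZeroG (n - a) a ≠ v} with hT
  set T' : Set ℕ := {v | ∀ a, 1 ≤ a → a ≤ n → a ≠ n + 1 → memZeroG (n - a) a ≠ v} with hT'
  have h1 : memZeroG n k = sInf T := memZeroG_spec n k
  have h2 : memZeroG n (n + 1) = sInf T' := memZeroG_spec n (n + 1)
  have hsub : T' ⊆ T := fun v hv a ha1 ha2 _ => hv a ha1 ha2 (by omega)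
  -- T' is nonempty
  obtain ⟨v, hv⟩ := Infinite.exists_notMem_finset
    ((Finset.Icc 1 n).attach.image (fun a => memZeroG (n - a.1) a.1))
  have hvT' : v ∈ T' := by
    intro a ha1 ha2 _ habs
    exact hv (Finset.mem_image.mpr ⟨⟨a, Finset.mem_Icc.mpr ⟨ha1, ha2⟩⟩, Finset.mem_attach _ _, habs⟩)
  have hT'ne : T'.Nonempty := ⟨v, hvT'⟩
  have hTne : T.Nonempty := ⟨v, hsub hvT'⟩
  have hmT : sInf T ∈ T := Nat.sInf_mem hTne
  by_cases hgm : sInf T = g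
  · right; rw [h1, hgm]
  · left
    rw [h1, h2]
    have hmT' : sInf T ∈ T' := by
      intro a ha1 ha2 _ habs
      by_cases hak : a = k
      · subst hak; exact hgm habs.symm
      · exact hmT a ha1 ha2 hak habs
    have hle1 : sInf T' ≤ sInf T := Nat.sInf_le hmT'
    have hle2 : sInf T ≤ sInf T' := Nat.sInf_le (hsub (Nat.sInf_mem hT'ne))
    omega
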